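/- arXiv:1212.4212 — 3 statements merged into one kernel-verified Lean document; each statement's English description precedes it below -/
import Mathlib

section
/- Let Σ > 0, X : ℝ → ℂ^{n×p}, M : ℝ → ℂ^{n×p} with M(σ + Σ) = M(σ) for all σ, F ∈ ℂ^{p×p}, and C ∈ ℂ^{p×p}. Suppose X(σ) = M(σ) · exp(σ • F) for all σ, that X(σ + Σ) = X(σ) · C for all σ, and that the only vector v ∈ ℂᵖ satisfying X(σ) v = 0 for all σ ∈ ℝ is v = 0 (i.e. the columns of X are linearly independent as functions). Then C = exp(Σ • F). -/
open NormedSpace -- for the exponential `exp` of matrices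

/-- Identification of the monodromy matrix: if `X(σ) = M(σ) · exp(σ • F)` with `M`
Σ-periodic, `X(σ + Σ) = X(σ) · C` for a constant matrix `C`, and the columns of `X` are
linearly independent as functions (the only `v` with `X(σ) v = 0` for all `σ` is `v = 0`),
then `C = exp(Σ • F)`. -/
theorem monodromy_matrix_eq_exp (n p : ℕ) (per : ℝ) (hper : 0 < per)
    (X M : ℝ → Matrix (Fin n) (Fin p) ℂ)
    (F C : Matrix (Fin p) (Fin p) ℂ)
    (hM : ∀ σ : ℝ, M (σ + per) = M σ)
    (hXM : ∀ σ : ℝ, X σ = M σ * exp (σ • F))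
    (hXC : ∀ σ : ℝ, X (σ + per) = X σ * C)
    (hindep : ∀ v : Fin p → ℂ, (∀ σ : ℝ, (X σ).mulVec v = 0) → v = 0) :
    C = exp (per • F) := by
  set E := exp (per • F) with hE
  have key : ∀ σ : ℝ, X σ * C = X σ * E := by
    intro σ
    have h1 : X (σ + per) = X σ * E := by
      rw [hXM (σ + per), hXM σ, hM σ, add_smul]
      rw [Matrix.exp_add_of_commute _ _ (((Commute.refl F).smul_right per).smul_left σ)]
      rw [Matrix.mul_assoc]
    rw [← h1, hXC σ]
  have hCE : ∀ v : Fin p → ℂ, C.mulVec v = E.mulVec v := by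
    intro v
    have := hindep ((C - E).mulVec v) ?_
    · have h2 : C.mulVec v - E.mulVec v = 0 := by
        rw [← Matrix.sub_mulVec]; exact this
      exact sub_eq_zero.mp h2
    · intro σ
      rw [Matrix.mulVec_mulVec, Matrix.mul_sub, key σ, sub_self, Matrix.zero_mulVec]
  ext i j
  have := congrFun (hCE (Pi.single j 1)) i
  simpa [Matrix.mulVec_single] using this
end

section
/- Let Σ > 0, let M : ℝ → ℂ^{n×p} satisfy M(σ + Σ) = M(σ) for all σ, let F, Q ∈ ℂ^{p×p} and let D ∈ ℂ^{p×p} be the diagonal matrix with diagonal entries λ : Fin p → ℂ, and suppose F · Q = Q · D. Define X(σ) = M(σ) · exp(σ • F). Then for every j ∈ Fin p, the function z_j(σ) := X(σ) · (Q e_j) satisfies z_j(σ) = exp(λ_j σ) • r_j(σ) for all σ, where r_j(σ) := M(σ) · (Q e_j) is Σ-periodic. In particular every such solution has the Floquet normal form: a Σ-periodic vector function times the exponential e^{λ_j σ}. -/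
open NormedSpace -- for the exponential `exp` of matrices

open Matrix in
lemma exp_intertwine {p : ℕ} (A B C : Matrix (Fin p) (Fin p) ℂ)
    (h : A * C = C * B) : exp A * C = C * exp B := by
  letI : NormedRing (Matrix (Fin p) (Fin p) ℂ) := Matrix.linftyOpNormedRing
  letI : NormedAlgebra ℂ (Matrix (Fin p) (Fin p) ℂ) := Matrix.linftyOpNormedAlgebra
  have hpow : ∀ k : ℕ, A ^ k * C = C * B ^ k := by
    intro k
    induction k with
    | zero => simp
    | succ k ih =>
      rw [pow_succ, pow_succ, mul_assoc, h, ← mul_assoc, ih, mul_assoc]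
  have hA : Summable fun k : ℕ => ((k.factorial : ℂ))⁻¹ • A ^ k := expSeries_summable' A
  have hB : Summable fun k : ℕ => ((k.factorial : ℂ))⁻¹ • B ^ k := expSeries_summable' B
  simp only [exp_eq_tsum ℂ]
  rw [← hA.tsum_mul_right C, ← hB.tsum_mul_left C]
  congr 1
  ext k
  rw [smul_mul_assoc, mul_smul_comm, hpow k]

/-- Floquet normal form of the solutions: if `M` is Σ-periodic, `F Q = Q D` with
`D = diagonal λ`, and `X(σ) = M(σ) · exp(σ • F)`, then for each `j` the solution
`z_j(σ) = X(σ) (Q e_j)` takes the form `z_j(σ) = e^{λ_j σ} • r_j(σ)` where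
`r_j(σ) = M(σ) (Q e_j)` is Σ-periodic. -/
theorem floquet_normal_form (n p : ℕ) (per : ℝ) (hper : 0 < per)
    (M : ℝ → Matrix (Fin n) (Fin p) ℂ)
    (hM : ∀ σ : ℝ, M (σ + per) = M σ)
    (F Q : Matrix (Fin p) (Fin p) ℂ) (lam : Fin p → ℂ)
    (hFQ : F * Q = Q * Matrix.diagonal lam)
    (X : ℝ → Matrix (Fin n) (Fin p) ℂ)
    (hX : ∀ σ : ℝ, X σ = M σ * exp (σ • F)) :
    ∀ j : Fin p,
      (∀ σ : ℝ, (M (σ + per)).mulVec (Q.mulVec (Pi.single j 1)) =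
        (M σ).mulVec (Q.mulVec (Pi.single j 1))) ∧
      (∀ σ : ℝ, (X σ).mulVec (Q.mulVec (Pi.single j 1)) =
        Complex.exp (lam j * σ) • (M σ).mulVec (Q.mulVec (Pi.single j 1))) := by
  intro j
  refine ⟨fun σ => by rw [hM σ], fun σ => ?_⟩
  have key : exp (σ • F) * Q = Q * exp (σ • Matrix.diagonal lam) := by
    apply exp_intertwine
    rw [Matrix.smul_mul, Matrix.mul_smul, hFQ]
  have h1 : σ • Matrix.diagonal lam = Matrix.diagonal fun i => lam i * σ := by
    ext i k
    rcases eq_or_ne i k with rfl | hik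
    · simp [mul_comm]
    · simp [Matrix.diagonal_apply_ne _ hik]
  have hdiag : exp (σ • Matrix.diagonal lam)
      = Matrix.diagonal fun i => Complex.exp (lam i * σ) := by
    rw [h1, Matrix.exp_diagonal, Complex.exp_eq_exp_ℂ]
    exact congrArg _ (Pi.exp_def (fun i => lam i * (σ : ℂ)))
  have h2 : (exp (σ • F)).mulVec (Q.mulVec (Pi.single j 1)) =
      Complex.exp (lam j * σ) • Q.mulVec (Pi.single j 1) := by
    rw [Matrix.mulVec_mulVec, key, hdiag, ← Matrix.mulVec_mulVec,
      Matrix.diagonal_mulVec_single, mul_one]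
    funext i
    simp [Matrix.mulVec_single, mul_comm]
  rw [hX, ← Matrix.mulVec_mulVec, h2, Matrix.mulVec_smul]
end

section
/- Let λ : Fin 3 → ℂ and f : ℝ³ → ℂ. Suppose that for each i ∈ {1,2,3} there exists a function g_i : ℝ³ → ℂ that does not depend on the i-th coordinate (i.e. g_i(x) = g_i(y) whenever x_j = y_j for all j ≠ i) such that f(x) = g_i(x) · exp(λ_i x_i) for all x ∈ ℝ³. Then f(x) = f(0) · exp(∑_i λ_i x_i) for all x ∈ ℝ³. That is, if a function factorizes as an exponential in each coordinate separately, it is globally a pure exponential times a constant. -/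
/-- Consistency of the three one-dimensional factorizations: if for each coordinate `i`
the function `f : ℝ³ → ℂ` factorizes as `f(x) = g_i(x) · exp(λ_i x_i)` where `g_i` does
not depend on the `i`-th coordinate, then `f(x) = f(0) · exp(∑ i, λ_i x_i)`:
`f` is globally a pure exponential times a constant. -/
theorem coordinatewise_exponential_factorization
    (lam : Fin 3 → ℂ) (f : (Fin 3 → ℝ) → ℂ)
    (h : ∀ i : Fin 3, ∃ g : (Fin 3 → ℝ) → ℂ,
      (∀ x y : Fin 3 → ℝ, (∀ j : Fin 3, j ≠ i → x j = y j) → g x = g y) ∧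
      ∀ x : Fin 3 → ℝ, f x = g x * Complex.exp (lam i * (x i : ℝ))) :
    ∀ x : Fin 3 → ℝ, f x = f 0 * Complex.exp (∑ i : Fin 3, lam i * (x i : ℝ)) := by
  have step : ∀ (i : Fin 3) (x : Fin 3 → ℝ),
      f x = f (Function.update x i 0) * Complex.exp (lam i * (x i : ℝ)) := by
    intro i x
    obtain ⟨g, hg, hf⟩ := h i
    have hgx : g (Function.update x i 0) = g x := by
      apply hg
      intro j hj
      exact Function.update_of_ne hj 0 x
    rw [hf x, hf (Function.update x i 0), hgx, Function.update_self]
    push_cast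
    simp
  intro x
  set x1 := Function.update x 0 0 with hx1
  set x2 := Function.update x1 1 0 with hx2
  set x3 := Function.update x2 2 0 with hx3
  have h30 : x3 = 0 := by
    funext j
    fin_cases j <;> simp [hx3, hx2, hx1, Function.update]
  have e1 : (x1 1 : ℝ) = x 1 := by simp [hx1, Function.update]
  have e2 : (x2 2 : ℝ) = x 2 := by simp [hx2, hx1, Function.update]
  calc f x = f x1 * Complex.exp (lam 0 * (x 0 : ℝ)) := step 0 x
    _ = f x2 * Complex.exp (lam 1 * (x 1 : ℝ)) * Complex.exp (lam 0 * (x 0 : ℝ)) := by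
        rw [step 1 x1, e1]
    _ = f 0 * Complex.exp (lam 2 * (x 2 : ℝ)) * Complex.exp (lam 1 * (x 1 : ℝ)) *
          Complex.exp (lam 0 * (x 0 : ℝ)) := by
        rw [step 2 x2, e2, ← hx3, h30]
    _ = f 0 * Complex.exp (∑ i : Fin 3, lam i * (x i : ℝ)) := by
        rw [Fin.sum_univ_three, Complex.exp_add, Complex.exp_add]; ring
end
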